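/- Let d ≥ 1, T > 0, let κ ∈ ℝ^{d×d}, μ̄ ∈ ℝ^d, let Σ_μ ∈ ℝ^{d×d} be symmetric, let Σ_R ∈ ℝ^{d×d} be symmetric positive definite, let ψ ∈ ℝ, and let A : [0,T] → ℝ^{d×d} with A(t) symmetric for every t, B : [0,T] → ℝ^d and C : [0,T] → ℝ be differentiable functions satisfying on [0,T]: A′(t) = −2A(t)Σ_μA(t) + κᵀA(t) + A(t)κ − ψΣ_R⁻¹ with A(T) = 0; B′(t) = −2A(t)κμ̄ + (κᵀ − 2A(t)Σ_μ)B(t) with B(T) = 0; C′(t) = −(1/2)B(t)ᵀΣ_μB(t) − B(t)ᵀκμ̄ − tr(Σ_μA(t)) with C(T) = 0. Define d(t,m) := exp( mᵀA(t)m + B(t)ᵀm + C(t) ) for t ∈ [0,T], m ∈ ℝ^d. Then d(T,m) = 1 for all m, and for all t ∈ [0,T] and m ∈ ℝ^d, ∂_t d(t,m) + (∇_m d(t,m))ᵀ κ(μ̄ − m) + (1/2) tr( Σ_μ ∇²_m d(t,m) ) + ψ mᵀΣ_R⁻¹m · d(t,m) = 0. -/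

import Mathlib

open Matrix

noncomputable def dotCLM {n : ℕ} (g : Fin n → ℝ) : (Fin n → ℝ) →L[ℝ] ℝ :=
  ∑ j, g j • (ContinuousLinearMap.proj j : (Fin n → ℝ) →L[ℝ] ℝ)

lemma dotCLM_apply {n : ℕ} (g w : Fin n → ℝ) : dotCLM g w = g ⬝ᵥ w := by
  simp [dotCLM, dotProduct]

lemma hasFDerivAt_proj {n : ℕ} (i : Fin n) (m : Fin n → ℝ) :
    HasFDerivAt (fun v : Fin n → ℝ => v i)
      (ContinuousLinearMap.proj i : (Fin n → ℝ) →L[ℝ] ℝ) m :=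
  (ContinuousLinearMap.proj i : (Fin n → ℝ) →L[ℝ] ℝ).hasFDerivAt

lemma hasFDerivAt_linear {n : ℕ} (b : Fin n → ℝ) (m : Fin n → ℝ) :
    HasFDerivAt (fun v : Fin n → ℝ => b ⬝ᵥ v) (dotCLM b) m := by
  have h : (fun v : Fin n → ℝ => b ⬝ᵥ v) = ⇑(dotCLM b) := by
    funext v; rw [dotCLM_apply]
  rw [h]
  exact (dotCLM b).hasFDerivAt

lemma hasFDerivAt_quad {n : ℕ} (M : Matrix (Fin n) (Fin n) ℝ) (hM : M.IsSymm) (m : Fin n → ℝ) :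
    HasFDerivAt (fun v : Fin n → ℝ => v ⬝ᵥ (M *ᵥ v)) (dotCLM ((2:ℝ) • (M *ᵥ m))) m := by
  have hfun : (fun v : Fin n → ℝ => v ⬝ᵥ (M *ᵥ v))
      = fun v => ∑ i, ∑ j, M i j * (v i * v j) := by
    funext v
    simp only [dotProduct, mulVec, Finset.mul_sum]
    exact Finset.sum_congr rfl fun i _ => Finset.sum_congr rfl fun j _ => by ring
  have h1 : HasFDerivAt (fun v : Fin n → ℝ => ∑ i, ∑ j, M i j * (v i * v j))
      (∑ i, ∑ j, M i j • (m i • (ContinuousLinearMap.proj j : (Fin n → ℝ) →L[ℝ] ℝ)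
        + m j • (ContinuousLinearMap.proj i : (Fin n → ℝ) →L[ℝ] ℝ))) m := by
    apply HasFDerivAt.fun_sum; intro i _
    apply HasFDerivAt.fun_sum; intro j _
    exact ((hasFDerivAt_proj i m).mul (hasFDerivAt_proj j m)).const_mul _
  have hL : (∑ i, ∑ j, M i j • (m i • (ContinuousLinearMap.proj j : (Fin n → ℝ) →L[ℝ] ℝ)
        + m j • (ContinuousLinearMap.proj i : (Fin n → ℝ) →L[ℝ] ℝ)))
      = dotCLM ((2:ℝ) • (M *ᵥ m)) := by
    ext w
    simp only [ContinuousLinearMap.sum_apply, ContinuousLinearMap.smul_apply,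
      ContinuousLinearMap.add_apply, ContinuousLinearMap.proj_apply, dotCLM_apply,
      smul_eq_mul, smul_dotProduct, dotProduct, mulVec, Pi.smul_apply]
    have h2 : ∀ i j : Fin n, M i j * (m i * w j + m j * w i)
        = M i j * m i * w j + M i j * m j * w i := fun i j => by ring
    rw [Finset.sum_congr rfl fun i _ => Finset.sum_congr rfl fun j _ => h2 i j]
    rw [Finset.sum_congr rfl fun i _ => Finset.sum_add_distrib (s := Finset.univ),
      Finset.sum_add_distrib]
    rw [Finset.sum_comm (f := fun i j => M i j * m i * w j)]
    have hs : ∀ i j : Fin n, M i j = M j i := fun i j => by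
      exact hM.apply j i
    calc (∑ j, ∑ i, M i j * m i * w j) + ∑ i, ∑ j, M i j * m j * w i
        = (∑ j, (∑ i, M j i * m i) * w j) + ∑ i, (∑ j, M i j * m j) * w i := by
          congr 1
          · exact Finset.sum_congr rfl fun j _ => by
              rw [Finset.sum_mul]
              exact Finset.sum_congr rfl fun i _ => by rw [← hs i j]
          · exact Finset.sum_congr rfl fun i _ => by rw [Finset.sum_mul]
      _ = ∑ i, 2 * (∑ j, M i j * m j) * w i := by
          rw [← Finset.sum_add_distrib]
          exact Finset.sum_congr rfl fun i _ => by ring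
  rw [hfun]; rw [← hL] at *; exact h1

lemma dotCLM_add {n : ℕ} (x y : Fin n → ℝ) : dotCLM (x + y) = dotCLM x + dotCLM y := by
  ext w
  simp [dotCLM_apply, add_dotProduct]

lemma hasFDerivAt_exp_quad {n : ℕ} (a : Matrix (Fin n) (Fin n) ℝ) (ha : a.IsSymm)
    (b : Fin n → ℝ) (c : ℝ) (m : Fin n → ℝ) :
    HasFDerivAt (fun v : Fin n → ℝ => Real.exp (v ⬝ᵥ (a *ᵥ v) + b ⬝ᵥ v + c))
      (Real.exp (m ⬝ᵥ (a *ᵥ m) + b ⬝ᵥ m + c) • dotCLM ((2:ℝ) • (a *ᵥ m) + b)) m := by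
  have h := (((hasFDerivAt_quad a ha m).add (hasFDerivAt_linear b m)).add_const c).exp
  rwa [dotCLM_add]


lemma symdot {n : ℕ} {M : Matrix (Fin n) (Fin n) ℝ} (hM : M.IsSymm) (u v : Fin n → ℝ) :
    u ⬝ᵥ (M *ᵥ v) = (M *ᵥ u) ⬝ᵥ v := by
  rw [dotProduct_mulVec, ← mulVec_transpose, hM]

lemma dot_transpose_mulVec {n : ℕ} (M : Matrix (Fin n) (Fin n) ℝ) (u v : Fin n → ℝ) :
    u ⬝ᵥ (Mᵀ *ᵥ v) = (M *ᵥ u) ⬝ᵥ v := by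
  rw [dotProduct_mulVec, vecMul_transpose]

lemma key {n : ℕ} (κ Sμ SR a : Matrix (Fin n) (Fin n) ℝ)
    (hSμ : Sμ.IsSymm) (ha : a.IsSymm) (μb b m : Fin n → ℝ) (ψ : ℝ) :
    (m ⬝ᵥ (((-2:ℝ) • (a * Sμ * a) + κᵀ * a + a * κ - ψ • SR) *ᵥ m)
      + ((-2:ℝ) • (a *ᵥ (κ *ᵥ μb)) + (κᵀ - (2:ℝ) • (a * Sμ)) *ᵥ b) ⬝ᵥ m
      + (-(1/2) * (b ⬝ᵥ (Sμ *ᵥ b)) - b ⬝ᵥ (κ *ᵥ μb) - (Sμ * a).trace))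
    + ((2:ℝ) • (a *ᵥ m) + b) ⬝ᵥ (κ *ᵥ (μb - m))
    + (1/2) * (∑ i, ∑ k, Sμ i k *
        (2 * a i k + ((2:ℝ) • (a *ᵥ m) + b) i * (((2:ℝ) • (a *ᵥ m) + b) k)))
    + ψ * (m ⬝ᵥ (SR *ᵥ m)) = 0 := by
  have hsum : (∑ i, ∑ k, Sμ i k *
        (2 * a i k + ((2:ℝ) • (a *ᵥ m) + b) i * (((2:ℝ) • (a *ᵥ m) + b) k)))
      = 2 * (Sμ * a).trace
        + ((2:ℝ) • (a *ᵥ m) + b) ⬝ᵥ (Sμ *ᵥ ((2:ℝ) • (a *ᵥ m) + b)) := by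
    set g : Fin n → ℝ := (2:ℝ) • (a *ᵥ m) + b with hg
    have htr : (Sμ * a).trace = ∑ i, ∑ k, Sμ i k * a i k := by
      simp only [Matrix.trace, Matrix.diag, Matrix.mul_apply]
      exact Finset.sum_congr rfl fun i _ => Finset.sum_congr rfl fun k _ => by
        rw [ha.apply k i]
    have hq : g ⬝ᵥ (Sμ *ᵥ g) = ∑ i, ∑ k, Sμ i k * (g i * g k) := by
      simp only [dotProduct, mulVec, Finset.mul_sum]
      exact Finset.sum_congr rfl fun i _ => Finset.sum_congr rfl fun k _ => by ring
    rw [htr, hq, Finset.mul_sum, ← Finset.sum_add_distrib]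
    refine Finset.sum_congr rfl fun i _ => ?_
    rw [Finset.mul_sum, ← Finset.sum_add_distrib]
    refine Finset.sum_congr rfl fun k _ => by ring
  rw [hsum]
  simp only [add_mulVec, sub_mulVec, smul_mulVec, ← mulVec_mulVec,
    Matrix.mulVec_add, Matrix.mulVec_smul, Matrix.mulVec_sub,
    add_dotProduct, sub_dotProduct, smul_dotProduct, dotProduct_add, dotProduct_sub,
    dotProduct_smul, smul_eq_mul]
  rw [symdot ha m (Sμ *ᵥ (a *ᵥ m)), dot_transpose_mulVec κ m (a *ᵥ m), symdot ha m (κ *ᵥ m),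
    show (a *ᵥ (κ *ᵥ μb)) ⬝ᵥ m = (a *ᵥ m) ⬝ᵥ (κ *ᵥ μb) from by rw [dotProduct_comm, symdot ha],
    show (κᵀ *ᵥ b) ⬝ᵥ m = b ⬝ᵥ (κ *ᵥ m) from by
      rw [dotProduct_comm, dot_transpose_mulVec, dotProduct_comm],
    show (a *ᵥ (Sμ *ᵥ b)) ⬝ᵥ m = (a *ᵥ m) ⬝ᵥ (Sμ *ᵥ b) from by rw [dotProduct_comm, symdot ha],
    show b ⬝ᵥ (Sμ *ᵥ (a *ᵥ m)) = (a *ᵥ m) ⬝ᵥ (Sμ *ᵥ b) from by rw [symdot hSμ, dotProduct_comm],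
    show (κ *ᵥ m) ⬝ᵥ (a *ᵥ m) = (a *ᵥ m) ⬝ᵥ (κ *ᵥ m) from dotProduct_comm _ _]
  ring


/-- Verification (multidimensional case) that the exponential-quadratic ansatz
`d(t,m) = exp(mᵀA(t)m + B(t)ᵀm + C(t))`, with `A, B, C` solving the matrix Riccati ODE
system, satisfies the linear parabolic PDE
`∂_t d + (∇_m d)ᵀκ(μ̄−m) + (1/2)tr(Σ_μ ∇²_m d) + ψ mᵀΣ_R⁻¹m · d = 0`
with terminal value `1`. -/
theorem stmt_15 (n : ℕ) (hn : 1 ≤ n) (T : ℝ) (hT : 0 < T)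
    (κ : Matrix (Fin n) (Fin n) ℝ) (μb : Fin n → ℝ)
    (Sμ SR : Matrix (Fin n) (Fin n) ℝ)
    (hSμ : Sμ.IsSymm) (hSRsym : SR.IsSymm) (hSRpd : SR.PosDef)
    (ψ : ℝ)
    (A : ℝ → Matrix (Fin n) (Fin n) ℝ) (B : ℝ → Fin n → ℝ) (C : ℝ → ℝ)
    (hAsym : ∀ t, (A t).IsSymm)
    (hAT : A T = 0) (hBT : B T = 0) (hCT : C T = 0)
    (hA : ∀ t ∈ Set.Icc 0 T, ∀ i j,
      HasDerivWithinAt (fun s => A s i j)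
        (((-2 : ℝ) • (A t * Sμ * A t) + κᵀ * A t + A t * κ - ψ • SR⁻¹) i j)
        (Set.Icc 0 T) t)
    (hB : ∀ t ∈ Set.Icc 0 T, ∀ i,
      HasDerivWithinAt (fun s => B s i)
        (((-2 : ℝ) • (A t *ᵥ (κ *ᵥ μb)) + (κᵀ - (2 : ℝ) • (A t * Sμ)) *ᵥ B t) i)
        (Set.Icc 0 T) t)
    (hC : ∀ t ∈ Set.Icc 0 T,
      HasDerivWithinAt C
        (-(1 / 2) * (B t ⬝ᵥ (Sμ *ᵥ B t)) - B t ⬝ᵥ (κ *ᵥ μb) - (Sμ * A t).trace)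
        (Set.Icc 0 T) t)
    (dd : ℝ → (Fin n → ℝ) → ℝ)
    (hdd : ∀ t m, dd t m = Real.exp (m ⬝ᵥ (A t *ᵥ m) + B t ⬝ᵥ m + C t)) :
    (∀ m : Fin n → ℝ, dd T m = 1) ∧
      ∀ t ∈ Set.Icc 0 T, ∀ m : Fin n → ℝ,
        derivWithin (fun s => dd s m) (Set.Icc 0 T) t +
            fderiv ℝ (fun v => dd t v) m (κ *ᵥ (μb - m)) +
            (1 / 2) * (Sμ * Matrix.of (fun i j =>
              fderiv ℝ (fun v => fderiv ℝ (fun w => dd t w) v (Pi.single j 1)) m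
                (Pi.single i 1))).trace +
            ψ * (m ⬝ᵥ (SR⁻¹ *ᵥ m)) * dd t m = 0 := by
  constructor
  · intro m
    rw [hdd, hAT, hBT, hCT]
    simp
  intro t ht m
  set a := A t with ha'
  set b := B t with hb'
  set A' : Matrix (Fin n) (Fin n) ℝ :=
    (-2 : ℝ) • (A t * Sμ * A t) + κᵀ * A t + A t * κ - ψ • SR⁻¹ with hA'
  set B' : Fin n → ℝ :=
    (-2 : ℝ) • (A t *ᵥ (κ *ᵥ μb)) + (κᵀ - (2 : ℝ) • (A t * Sμ)) *ᵥ B t with hB'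
  set C' : ℝ :=
    -(1 / 2) * (B t ⬝ᵥ (Sμ *ᵥ B t)) - B t ⬝ᵥ (κ *ᵥ μb) - (Sμ * A t).trace with hC'
  set g : Fin n → ℝ := (2:ℝ) • (a *ᵥ m) + b with hgdef
  have hE : dd t m = Real.exp (m ⬝ᵥ (a *ᵥ m) + b ⬝ᵥ m + C t) := hdd t m
  -- time derivative
  have hqt : HasDerivWithinAt (fun s => m ⬝ᵥ (A s *ᵥ m) + B s ⬝ᵥ m + C s)
      (m ⬝ᵥ (A' *ᵥ m) + B' ⬝ᵥ m + C') (Set.Icc 0 T) t := by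
    have h1 : HasDerivWithinAt (fun s => m ⬝ᵥ (A s *ᵥ m)) (m ⬝ᵥ (A' *ᵥ m))
        (Set.Icc 0 T) t := by
      have hfun : (fun s => m ⬝ᵥ (A s *ᵥ m))
          = fun s => ∑ i, ∑ j, m i * (A s i j * m j) := by
        funext s; simp only [dotProduct, mulVec, Finset.mul_sum]
      have hval : m ⬝ᵥ (A' *ᵥ m) = ∑ i, ∑ j, m i * (A' i j * m j) := by
        simp only [dotProduct, mulVec, Finset.mul_sum]
      rw [hfun, hval]
      exact HasDerivWithinAt.fun_sum fun i _ => HasDerivWithinAt.fun_sum fun j _ =>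
        ((hA t ht i j).mul_const (m j)).const_mul (m i)
    have h2 : HasDerivWithinAt (fun s => B s ⬝ᵥ m) (B' ⬝ᵥ m) (Set.Icc 0 T) t := by
      have hfun : (fun s => B s ⬝ᵥ m) = fun s => ∑ i, B s i * m i := by
        funext s; simp only [dotProduct]
      have hval : B' ⬝ᵥ m = ∑ i, B' i * m i := by simp only [dotProduct]
      rw [hfun, hval]
      exact HasDerivWithinAt.fun_sum fun i _ => (hB t ht i).mul_const (m i)
    exact (h1.add h2).add (hC t ht)
  have hderivt : derivWithin (fun s => dd s m) (Set.Icc 0 T) t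
      = dd t m * (m ⬝ᵥ (A' *ᵥ m) + B' ⬝ᵥ m + C') := by
    have hfun : (fun s => dd s m)
        = fun s => Real.exp (m ⬝ᵥ (A s *ᵥ m) + B s ⬝ᵥ m + C s) :=
      funext fun s => hdd s m
    rw [hfun, hE]
    exact hqt.exp.derivWithin (uniqueDiffOn_Icc hT t ht)
  -- spatial derivative
  have hF : ∀ v : Fin n → ℝ, HasFDerivAt (fun w => dd t w)
      (Real.exp (v ⬝ᵥ (a *ᵥ v) + b ⬝ᵥ v + C t) • dotCLM ((2:ℝ) • (a *ᵥ v) + b)) v := by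
    intro v
    have hfun : (fun w => dd t w)
        = fun w => Real.exp (w ⬝ᵥ (a *ᵥ w) + b ⬝ᵥ w + C t) := funext fun w => hdd t w
    rw [hfun]
    exact hasFDerivAt_exp_quad a (hAsym t) b (C t) v
  have hgrad : ∀ (v : Fin n → ℝ) (j : Fin n),
      fderiv ℝ (fun w => dd t w) v (Pi.single j 1)
        = Real.exp (v ⬝ᵥ (a *ᵥ v) + b ⬝ᵥ v + C t) * ((2:ℝ) • (a *ᵥ v) + b) j := by
    intro v j
    rw [(hF v).fderiv, ContinuousLinearMap.smul_apply, dotCLM_apply,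
      dotProduct_single, mul_one, smul_eq_mul]
  have hgj : ∀ (v : Fin n → ℝ) (k : Fin n),
      ((2:ℝ) • (a *ᵥ v) + b) k = 2 * (a k ⬝ᵥ v) + b k := by
    intro v k
    simp [mulVec, Pi.smul_apply, smul_eq_mul]
  have hhess : ∀ i j : Fin n,
      fderiv ℝ (fun v => fderiv ℝ (fun w => dd t w) v (Pi.single j 1)) m
          (Pi.single i 1)
        = dd t m * (2 * a j i + g j * g i) := by
    intro i j
    have hfun : (fun v => fderiv ℝ (fun w => dd t w) v (Pi.single j 1))
        = fun v => Real.exp (v ⬝ᵥ (a *ᵥ v) + b ⬝ᵥ v + C t) * (2 * (a j ⬝ᵥ v) + b j) := by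
      funext v; rw [hgrad v j, hgj v j]
    rw [hfun]
    have hlin : HasFDerivAt (fun v : Fin n → ℝ => 2 * (a j ⬝ᵥ v) + b j)
        ((2:ℝ) • dotCLM (a j)) m :=
      ((hasFDerivAt_linear (a j) m).const_mul 2).add_const (b j)
    have hmul : HasFDerivAt (fun v => Real.exp (v ⬝ᵥ (a *ᵥ v) + b ⬝ᵥ v + C t) * (2 * (a j ⬝ᵥ v) + b j)) _ m :=
      (hasFDerivAt_exp_quad a (hAsym t) b (C t) m).mul hlin
    rw [hmul.fderiv]
    simp only [ContinuousLinearMap.add_apply, ContinuousLinearMap.smul_apply,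
      dotCLM_apply, dotProduct_single, smul_eq_mul, mul_one]
    rw [hE, hgdef, hgj m i, hgj m j]
    ring
  -- assemble
  have htr : (Sμ * Matrix.of (fun i j =>
        fderiv ℝ (fun v => fderiv ℝ (fun w => dd t w) v (Pi.single j 1)) m
          (Pi.single i 1))).trace
      = dd t m * (∑ i, ∑ k, Sμ i k * (2 * a i k + g i * g k)) := by
    simp only [Matrix.trace, Matrix.diag, Matrix.mul_apply, Matrix.of_apply]
    rw [Finset.mul_sum]
    refine Finset.sum_congr rfl fun i _ => ?_
    rw [Finset.mul_sum]
    refine Finset.sum_congr rfl fun k _ => ?_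
    rw [hhess k i]
    ring
  have hsp : fderiv ℝ (fun v => dd t v) m (κ *ᵥ (μb - m))
      = dd t m * (g ⬝ᵥ (κ *ᵥ (μb - m))) := by
    rw [(hF m).fderiv, ContinuousLinearMap.smul_apply, dotCLM_apply, smul_eq_mul, hE, hgdef]
  rw [hderivt, hsp, htr]
  have hkey := key κ Sμ (SR⁻¹) a hSμ (hAsym t) μb b m ψ
  rw [hgdef] at htr ⊢
  rw [hA', hB', hC', ← ha', ← hb']
  linear_combination (dd t m) * hkey
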